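/- (Toeplitz/Bessel determinant for asymmetric hopping, regime 0 ≤ v < 1.) Let w ∈ ℂ, 0 ≤ v < 1, and let φ_v ∈ ℝ be defined by cosh(φ_v) = 1/√(1−v²) and sinh(φ_v) = v/√(1−v²) (i.e. φ_v = artanh v). Define c_n = (1/2π) ∫_{-π}^{π} exp( 2w√(1−v²) cos θ ) e^{-inθ} dθ for n ∈ ℤ. Then for every N ≥ 1, (1/N!) ∫_{[-π,π]^N} ∏_{1≤j<k≤N} |e^{iφ_j} − e^{iφ_k}|² ∏_{j=1}^{N} exp( 2w ( cos φ_j − i v sin φ_j ) ) (dφ_j/2π) = det( e^{(k−j)φ_v} c_{j−k} )_{j,k=1}^{N}. -/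

import Mathlib

open MeasureTheory

section Aux

open Complex intervalIntegral

lemma orth (m : ℤ) : (∫ θ in (-Real.pi)..Real.pi, Complex.exp (Complex.I * m * θ)) =
    if m = 0 then (2 * Real.pi : ℂ) else 0 := by
  rcases eq_or_ne m 0 with hm | hm
  · simp [hm, two_mul]
  · rw [if_neg hm]
    have hc : (Complex.I * m : ℂ) ≠ 0 := by
      simp [Complex.I_ne_zero, hm]
    rw [integral_exp_mul_complex (a := -Real.pi) (b := Real.pi) hc]
    have hsq : Complex.exp (Complex.I * m * Real.pi) * Complex.exp (Complex.I * m * Real.pi) = 1 := by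
      rw [← Complex.exp_add]
      have : (Complex.I * m * Real.pi) + (Complex.I * m * Real.pi) = m * (2 * Real.pi * Complex.I) := by ring
      rw [this, Complex.exp_int_mul_two_pi_mul_I]
    have hu : Complex.exp (Complex.I * m * Real.pi) * Complex.exp (Complex.I * m * (-Real.pi:ℝ)) = 1 := by
      rw [← Complex.exp_add]
      have : (Complex.I * m * Real.pi) + (Complex.I * m * (-Real.pi:ℝ)) = 0 := by
        push_cast; ring
      rw [this, Complex.exp_zero]
    have : Complex.exp (Complex.I * m * (-Real.pi:ℝ)) = Complex.exp (Complex.I * m * Real.pi) :=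
      mul_left_cancel₀ (Complex.exp_ne_zero _) (hu.trans hsq.symm)
    rw [this, sub_self, zero_div]

lemma exp_tsum' (z : ℂ) : Complex.exp z = ∑' p : ℕ, z ^ p / p.factorial := by
  rw [Complex.exp_eq_exp_ℂ, NormedSpace.exp_eq_tsum_div]

noncomputable def term (A B : ℂ) (n : ℤ) (pq : ℕ × ℕ) (θ : ℝ) : ℂ :=
  A ^ pq.1 * B ^ pq.2 / (pq.1.factorial * pq.2.factorial) *
    Complex.exp (Complex.I * (((pq.1 : ℤ) - pq.2 - n : ℤ) : ℂ) * θ)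

lemma pointwise (A B : ℂ) (n : ℤ) (θ : ℝ) :
    Complex.exp (A * Complex.exp (Complex.I * θ) + B * Complex.exp (-(Complex.I * θ))) *
      Complex.exp (-Complex.I * n * θ) = ∑' pq : ℕ × ℕ, term A B n pq θ := by
  have hs : ∀ z : ℂ, Summable (fun p : ℕ => ‖z ^ p / (p.factorial : ℂ)‖) := by
    intro z
    simpa [norm_div, norm_pow] using Real.summable_pow_div_factorial ‖z‖
  rw [Complex.exp_add, exp_tsum' (A * Complex.exp (Complex.I * θ)),
    exp_tsum' (B * Complex.exp (-(Complex.I * θ)))]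
  rw [tsum_mul_tsum_of_summable_norm (hs _) (hs _), ← tsum_mul_right]
  apply tsum_congr
  intro pq
  unfold term
  rw [mul_pow, mul_pow, ← Complex.exp_nat_mul, ← Complex.exp_nat_mul]
  have he : Complex.exp (↑pq.1 * (Complex.I * ↑θ)) * Complex.exp (↑pq.2 * -(Complex.I * ↑θ)) *
      Complex.exp (-Complex.I * ↑n * ↑θ)
      = Complex.exp (Complex.I * (((pq.1 : ℤ) - pq.2 - n : ℤ) : ℂ) * θ) := by
    rw [← Complex.exp_add, ← Complex.exp_add]; congr 1; push_cast; ring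
  rw [← he]; ring

lemma habs1 (m : ℤ) (θ : ℝ) : ‖Complex.exp (Complex.I * m * θ)‖ = 1 := by
  rw [show (Complex.I * (m:ℂ) * (θ:ℂ)) = ((m * θ : ℝ) : ℂ) * Complex.I by push_cast; ring]
  exact Complex.norm_exp_ofReal_mul_I _

lemma term_cont (A B : ℂ) (n : ℤ) (pq : ℕ × ℕ) : Continuous (term A B n pq) := by
  unfold term
  fun_prop

lemma coeffSeries (A B : ℂ) (n : ℤ) :
    (∫ θ in (-Real.pi)..Real.pi,
        Complex.exp (A * Complex.exp (Complex.I * θ) + B * Complex.exp (-(Complex.I * θ))) *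
          Complex.exp (-Complex.I * n * θ))
      = ∑' pq : ℕ × ℕ, if ((pq.1 : ℤ) - pq.2 = n) then
          (2 * Real.pi : ℂ) * (A ^ pq.1 * B ^ pq.2 / (pq.1.factorial * pq.2.factorial)) else 0 := by
  have hle : (-Real.pi) ≤ Real.pi := by linarith [Real.pi_pos]
  have hnn : ∀ pq : ℕ × ℕ, ∀ θ : ℝ, ‖term A B n pq θ‖₊
      = ‖A ^ pq.1 * B ^ pq.2 / ((pq.1.factorial : ℂ) * pq.2.factorial)‖₊ := by
    intro pq θ
    have : ‖term A B n pq θ‖ = ‖A ^ pq.1 * B ^ pq.2 / ((pq.1.factorial : ℂ) * pq.2.factorial)‖ := by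
      unfold term
      rw [norm_mul, habs1, mul_one]
    exact NNReal.coe_injective (by simpa using this)
  have hsum : Summable (fun pq : ℕ × ℕ =>
      ‖A ^ pq.1 * B ^ pq.2 / ((pq.1.factorial : ℂ) * pq.2.factorial)‖) := by
    have h1 : Summable (fun p : ℕ => ‖A‖ ^ p / (p.factorial : ℝ)) :=
      Real.summable_pow_div_factorial _
    have h2 : Summable (fun q : ℕ => ‖B‖ ^ q / (q.factorial : ℝ)) :=
      Real.summable_pow_div_factorial _
    have := h1.mul_of_nonneg h2 (fun p => by positivity) (fun q => by positivity)
    apply this.congr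
    intro pq
    rw [norm_div, norm_mul, norm_mul, norm_pow, norm_pow]
    simp only [Complex.norm_natCast]
    try rw [div_mul_div_comm]
    try rfl
  rw [intervalIntegral.integral_of_le hle]
  calc (∫ θ in Set.Ioc (-Real.pi) Real.pi,
        Complex.exp (A * Complex.exp (Complex.I * θ) + B * Complex.exp (-(Complex.I * θ))) *
          Complex.exp (-Complex.I * n * θ))
      = ∫ θ in Set.Ioc (-Real.pi) Real.pi, ∑' pq : ℕ × ℕ, term A B n pq θ := by
        apply MeasureTheory.integral_congr_ae
        filter_upwards with θ
        exact pointwise A B n θ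
    _ = ∑' pq : ℕ × ℕ, ∫ θ in Set.Ioc (-Real.pi) Real.pi, term A B n pq θ := by
        apply integral_tsum
        · exact fun pq => (term_cont A B n pq).aestronglyMeasurable
        · rw [ne_eq]
          have hcalc : ∀ pq : ℕ × ℕ, (∫⁻ θ in Set.Ioc (-Real.pi) Real.pi, ‖term A B n pq θ‖₊)
              = (‖A ^ pq.1 * B ^ pq.2 / ((pq.1.factorial : ℂ) * pq.2.factorial)‖₊ : ENNReal)
                * ENNReal.ofReal (2 * Real.pi) := by
            intro pq
            rw [lintegral_congr_ae (Filter.Eventually.of_forall fun θ => by rw [hnn pq θ])]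
            rw [lintegral_const, Measure.restrict_apply MeasurableSet.univ, Set.univ_inter,
              Real.volume_Ioc]
            congr 1
            ring_nf
          simp only [enorm_eq_nnnorm]
          rw [tsum_congr hcalc, ENNReal.tsum_mul_right]
          apply ENNReal.mul_ne_top
          · rw [ENNReal.tsum_coe_ne_top_iff_summable]
            rw [← NNReal.summable_coe]
            simpa only [coe_nnnorm] using hsum
          · exact ENNReal.ofReal_ne_top
    _ = ∑' pq : ℕ × ℕ, if ((pq.1 : ℤ) - pq.2 = n) then
          (2 * Real.pi : ℂ) * (A ^ pq.1 * B ^ pq.2 / (pq.1.factorial * pq.2.factorial)) else 0 := by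
        apply tsum_congr
        intro pq
        rw [← intervalIntegral.integral_of_le hle]
        unfold term
        rw [intervalIntegral.integral_const_mul, orth]
        rcases eq_or_ne ((pq.1 : ℤ) - pq.2) n with h | h
        · rw [if_pos (by omega), if_pos h]; ring
        · rw [if_neg (by omega), if_neg h, mul_zero]

lemma weight_eq (w : ℂ) (v : ℝ) (θ : ℝ) :
    2*w*((Real.cos θ : ℂ) - Complex.I*v*Real.sin θ)
      = (w*(1-v)) * Complex.exp (Complex.I*θ) + (w*(1+v)) * Complex.exp (-(Complex.I*θ)) := by
  rw [Complex.ofReal_cos, Complex.ofReal_sin, Complex.cos, Complex.sin,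
    mul_comm (Complex.I) (θ:ℂ), show -((θ:ℂ)*Complex.I) = -(θ:ℂ)*Complex.I by ring]
  have := Complex.I_sq
  linear_combination (w * v * (Complex.exp ((θ:ℂ)*Complex.I) - Complex.exp (-(θ:ℂ)*Complex.I))) * this

lemma weight2_eq (w : ℂ) (r : ℝ) (θ : ℝ) :
    2*w*(r:ℂ)*(Real.cos θ : ℂ)
      = (w*r) * Complex.exp (Complex.I*θ) + (w*r) * Complex.exp (-(Complex.I*θ)) := by
  rw [Complex.ofReal_cos, Complex.cos, mul_comm (Complex.I) (θ:ℂ),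
    show -((θ:ℂ)*Complex.I) = -(θ:ℂ)*Complex.I by ring]
  ring

lemma entry_eq (w : ℂ) (v : ℝ) (hv0 : 0 ≤ v) (hv1 : v < 1) (φv : ℝ)
    (hcosh : Real.cosh φv = 1 / Real.sqrt (1 - v ^ 2))
    (hsinh : Real.sinh φv = v / Real.sqrt (1 - v ^ 2)) (n : ℤ) :
    (∫ θ in (-Real.pi)..Real.pi,
        Complex.exp (2*w*((Real.cos θ : ℂ) - Complex.I*v*Real.sin θ)) *
          Complex.exp (-Complex.I*n*θ))
      = ((Real.exp (-(n:ℝ)*φv) : ℝ) : ℂ) *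
        ∫ θ in (-Real.pi)..Real.pi,
          Complex.exp (2*w*((Real.sqrt (1-v^2) : ℝ):ℂ)*(Real.cos θ : ℂ)) *
            Complex.exp (-Complex.I*n*θ) := by
  have h2 : (0:ℝ) < 1 - v^2 := by nlinarith
  have hs0 : 0 < Real.sqrt (1 - v^2) := Real.sqrt_pos.mpr h2
  have hexpP : Real.exp φv * Real.sqrt (1-v^2) = 1 + v := by
    rw [← Real.cosh_add_sinh, hcosh, hsinh]; field_simp
  have hexpM : Real.exp (-φv) * Real.sqrt (1-v^2) = 1 - v := by
    rw [← Real.cosh_sub_sinh, hcosh, hsinh]; field_simp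
  have hA : w*(1-(v:ℂ)) = (w * ((Real.sqrt (1-v^2) : ℝ) : ℂ)) * ((Real.exp (-φv) : ℝ) : ℂ) := by
    have : ((1 - v : ℝ) : ℂ) = ((Real.exp (-φv) * Real.sqrt (1-v^2) : ℝ) : ℂ) := by rw [hexpM]
    push_cast at this ⊢
    linear_combination w * this
  have hB : w*(1+(v:ℂ)) = (w * ((Real.sqrt (1-v^2) : ℝ) : ℂ)) * ((Real.exp φv : ℝ) : ℂ) := by
    have : ((1 + v : ℝ) : ℂ) = ((Real.exp φv * Real.sqrt (1-v^2) : ℝ) : ℂ) := by rw [hexpP]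
    push_cast at this ⊢
    linear_combination w * this
  simp only [weight_eq w v, weight2_eq w (Real.sqrt (1-v^2))]
  rw [coeffSeries, coeffSeries, ← tsum_mul_left]
  apply tsum_congr
  intro pq
  by_cases h : ((pq.1 : ℤ) - pq.2 = n)
  · rw [if_pos h, if_pos h, hA, hB, mul_pow, mul_pow]
    have hkey : ((Real.exp (-φv) : ℝ) : ℂ)^pq.1 * ((Real.exp φv : ℝ) : ℂ)^pq.2
        = ((Real.exp (-(n:ℝ)*φv) : ℝ) : ℂ) := by
      rw [← Complex.ofReal_pow, ← Complex.ofReal_pow, ← Complex.ofReal_mul]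
      congr 1
      rw [← Real.exp_nat_mul, ← Real.exp_nat_mul, ← Real.exp_add]
      congr 1
      have hqp : ((pq.2:ℝ) - (pq.1:ℝ)) = -(n:ℝ) := by
        have h2 : ((pq.2:ℤ) - (pq.1:ℤ)) = -n := by omega
        exact_mod_cast congrArg (fun z : ℤ => (z : ℝ)) h2
      linear_combination φv * hqp
    rw [← hkey]
    ring
  · rw [if_neg h, if_neg h, mul_zero]

-- Vandermonde pointwise lemma
lemma vdm (N : ℕ) (x : Fin N → ℝ) :
    (∏ j : Fin N, ∏ k : Fin N, if j < k then
        ((‖Complex.exp (Complex.I * x j) - Complex.exp (Complex.I * x k)‖ : ℝ) : ℂ) ^ 2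
      else 1)
    = (Matrix.vandermonde (fun k => Complex.exp (Complex.I * x k))).det *
      (Matrix.vandermonde (fun k => Complex.exp (-(Complex.I * x k)))).det := by
  rw [Matrix.det_vandermonde, Matrix.det_vandermonde, ← Finset.prod_mul_distrib]
  apply Finset.prod_congr rfl
  intro j _
  rw [← Finset.prod_mul_distrib]
  rw [show Finset.Ioi j = Finset.filter (fun k => j < k) Finset.univ from by ext k; simp]
  rw [Finset.prod_filter]
  apply Finset.prod_congr rfl
  intro k _
  by_cases hk : j < k
  · rw [if_pos hk, if_pos hk]
    have hconj : (starRingEnd ℂ) (Complex.exp (Complex.I * x j) - Complex.exp (Complex.I * x k))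
        = Complex.exp (-(Complex.I * x j)) - Complex.exp (-(Complex.I * x k)) := by
      rw [map_sub, ← Complex.exp_conj, ← Complex.exp_conj]
      congr 1 <;> simp [map_mul, Complex.conj_I, Complex.conj_ofReal]
    calc ((‖Complex.exp (Complex.I * x j) - Complex.exp (Complex.I * x k)‖ : ℝ) : ℂ) ^ 2
        = (((‖Complex.exp (Complex.I * x j) - Complex.exp (Complex.I * x k)‖) ^ 2 : ℝ) : ℂ) := by
          push_cast; ring
      _ = ((Complex.normSq (Complex.exp (Complex.I * x j) - Complex.exp (Complex.I * x k)) : ℝ) : ℂ) := by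
          rw [Complex.sq_norm]
      _ = (Complex.exp (Complex.I * x j) - Complex.exp (Complex.I * x k)) *
          (starRingEnd ℂ) (Complex.exp (Complex.I * x j) - Complex.exp (Complex.I * x k)) := by
          rw [Complex.mul_conj]
      _ = (Complex.exp (Complex.I * x k) - Complex.exp (Complex.I * x j)) *
          (Complex.exp (-(Complex.I * x k)) - Complex.exp (-(Complex.I * x j))) := by
          rw [hconj]; ring
  · rw [if_neg hk, if_neg hk]

lemma detE (N : ℕ) (e : Fin N → ℂ) :
    (Matrix.vandermonde e).det
      = ∑ σ : Equiv.Perm (Fin N), ((Equiv.Perm.sign σ : ℤ) : ℂ) * ∏ i, e i ^ ((σ i : ℕ)) := by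
  rw [← Matrix.det_transpose, Matrix.det_apply']
  simp [Matrix.transpose_apply, Matrix.vandermonde]

noncomputable def mcoef (w : ℂ) (v : ℝ) (n : ℤ) : ℂ :=
  (1/(2*(Real.pi:ℂ))) * ∫ θ in (-Real.pi)..Real.pi,
    Complex.exp (2*w*((Real.cos θ : ℂ) - Complex.I*v*Real.sin θ)) *
      Complex.exp (-Complex.I*n*θ)

noncomputable def gfun (w : ℂ) (v : ℝ) (d : ℤ) (φ : ℝ) : ℂ :=
  Complex.exp (Complex.I * (d:ℂ) * φ) *
    Complex.exp (2*w*((Real.cos φ : ℂ) - Complex.I*v*Real.sin φ)) * (1/(2*(Real.pi:ℂ)))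

lemma gfun_cont (w : ℂ) (v : ℝ) (d : ℤ) : Continuous (gfun w v d) := by
  unfold gfun
  fun_prop

lemma gfun_int (w : ℂ) (v : ℝ) (d : ℤ) :
    (∫ φ in Set.Icc (-Real.pi) Real.pi, gfun w v d φ) = mcoef w v (-d) := by
  have hle : (-Real.pi) ≤ Real.pi := by linarith [Real.pi_pos]
  rw [integral_Icc_eq_integral_Ioc, ← intervalIntegral.integral_of_le hle]
  unfold mcoef
  rw [← intervalIntegral.integral_const_mul]
  apply intervalIntegral.integral_congr
  intro θ _
  unfold gfun
  have h : -Complex.I*(((-d : ℤ)):ℂ)*θ = Complex.I*(d:ℂ)*θ := by push_cast; ring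
  beta_reduce
  rw [h]
  ring

lemma integrand_expand (w : ℂ) (v : ℝ) (N : ℕ) (x : Fin N → ℝ) :
    ((∏ j : Fin N, ∏ k : Fin N, if j < k then
        ((‖Complex.exp (Complex.I * x j) - Complex.exp (Complex.I * x k)‖ : ℝ) : ℂ) ^ 2
      else 1) *
      (∏ j : Fin N,
        Complex.exp (2 * w * ((Real.cos (x j) : ℂ) - Complex.I * v * Real.sin (x j)))) *
      (1 / (2 * (Real.pi : ℂ))) ^ N)
    = ∑ σ : Equiv.Perm (Fin N), ∑ τ : Equiv.Perm (Fin N),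
        (((Equiv.Perm.sign σ : ℤ) : ℂ) * ((Equiv.Perm.sign τ : ℤ) : ℂ)) *
          ∏ i : Fin N, gfun w v (((σ i : ℕ) : ℤ) - ((τ i : ℕ) : ℤ)) (x i) := by
  have hterm : ∀ (p q : ℕ) (φ : ℝ),
      Complex.exp (Complex.I * φ) ^ p * Complex.exp (-(Complex.I * φ)) ^ q
        = Complex.exp (Complex.I * (((p:ℤ) - (q:ℤ) : ℤ):ℂ) * φ) := by
    intro p q φ
    rw [← Complex.exp_nat_mul, ← Complex.exp_nat_mul, ← Complex.exp_add]
    congr 1; push_cast; ring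
  rw [vdm N x, detE, detE, Finset.sum_mul_sum]
  simp only [Finset.sum_mul]
  apply Finset.sum_congr rfl
  intro σ _
  apply Finset.sum_congr rfl
  intro τ _
  have h1 : (1/(2*(Real.pi:ℂ)))^N = ∏ _i : Fin N, (1/(2*(Real.pi:ℂ))) := by
    simp [Finset.prod_const]
  trans ((((Equiv.Perm.sign σ : ℤ) : ℂ) * ((Equiv.Perm.sign τ : ℤ) : ℂ)) *
        ∏ i : Fin N, (Complex.exp (Complex.I * x i) ^ ((σ i : ℕ)) *
          Complex.exp (-(Complex.I * x i)) ^ ((τ i : ℕ)) *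
          Complex.exp (2 * w * ((Real.cos (x i) : ℂ) - Complex.I * v * Real.sin (x i))) *
          (1 / (2 * (Real.pi : ℂ)))))
  · rw [h1, Finset.prod_mul_distrib, Finset.prod_mul_distrib, Finset.prod_mul_distrib]
    ring
  · congr 1
    apply Finset.prod_congr rfl
    intro i _
    unfold gfun
    rw [hterm]


lemma box_fubini (N : ℕ) (g : Fin N → ℝ → ℂ) :
    (∫ x : Fin N → ℝ in Set.univ.pi (fun _ => Set.Icc (-Real.pi) Real.pi), ∏ i, g i (x i))
      = ∏ i, ∫ φ in Set.Icc (-Real.pi) Real.pi, g i φ := by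
  have hbox : MeasurableSet (Set.univ.pi fun _ : Fin N => Set.Icc (-Real.pi) Real.pi) :=
    MeasurableSet.univ_pi fun _ => measurableSet_Icc
  rw [← MeasureTheory.integral_indicator hbox]
  have hind : (Set.univ.pi fun _ : Fin N => Set.Icc (-Real.pi) Real.pi).indicator
      (fun x => ∏ i, g i (x i))
      = fun x => ∏ i, (Set.Icc (-Real.pi) Real.pi).indicator (g i) (x i) := by
    funext x
    by_cases hx : x ∈ Set.univ.pi fun _ : Fin N => Set.Icc (-Real.pi) Real.pi
    · rw [Set.indicator_of_mem hx]
      apply Finset.prod_congr rfl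
      intro i _
      rw [Set.indicator_of_mem (hx i (Set.mem_univ i))]
    · rw [Set.indicator_of_notMem hx]
      symm
      rw [Set.mem_univ_pi] at hx
      push_neg at hx
      obtain ⟨i, hi⟩ := hx
      exact Finset.prod_eq_zero (Finset.mem_univ i) (Set.indicator_of_notMem hi _)
  rw [hind, integral_fintype_prod_volume_eq_prod (ι := Fin N)
    (fun i φ => (Set.Icc (-Real.pi) Real.pi).indicator (g i) φ)]
  apply Finset.prod_congr rfl
  intro i _
  rw [MeasureTheory.integral_indicator measurableSet_Icc]


lemma perm_sum (N : ℕ) (m : ℤ → ℂ) :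
    (∑ σ : Equiv.Perm (Fin N), ∑ τ : Equiv.Perm (Fin N),
        (((Equiv.Perm.sign σ : ℤ) : ℂ) * ((Equiv.Perm.sign τ : ℤ) : ℂ)) *
          ∏ i : Fin N, m (-(((σ i : ℕ) : ℤ) - ((τ i : ℕ) : ℤ))))
      = (N.factorial : ℂ) *
        Matrix.det (Matrix.of fun j k : Fin N => m ((j : ℤ) - (k : ℤ))) := by
  have step1 : ∀ σ : Equiv.Perm (Fin N),
      (∑ τ : Equiv.Perm (Fin N),
        (((Equiv.Perm.sign σ : ℤ) : ℂ) * ((Equiv.Perm.sign τ : ℤ) : ℂ)) *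
          ∏ i : Fin N, m (-(((σ i : ℕ) : ℤ) - ((τ i : ℕ) : ℤ))))
      = ∑ ρ : Equiv.Perm (Fin N), ((Equiv.Perm.sign ρ : ℤ) : ℂ) *
          ∏ i : Fin N, m (((ρ i : ℕ) : ℤ) - ((i : ℕ) : ℤ)) := by
    intro σ
    rw [← Fintype.sum_equiv (Equiv.mulRight σ)
      (fun ρ => (((Equiv.Perm.sign σ : ℤ) : ℂ) * ((Equiv.Perm.sign (ρ * σ) : ℤ) : ℂ)) *
        ∏ i : Fin N, m (-(((σ i : ℕ) : ℤ) - (((ρ * σ) i : ℕ) : ℤ))))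
      _ (fun ρ => rfl)]
    apply Finset.sum_congr rfl
    intro ρ _
    have hsgn : (((Equiv.Perm.sign σ : ℤ) : ℂ) * ((Equiv.Perm.sign (ρ * σ) : ℤ) : ℂ))
        = ((Equiv.Perm.sign ρ : ℤ) : ℂ) := by
      rw [Equiv.Perm.sign_mul]
      rcases Int.units_eq_one_or (Equiv.Perm.sign σ) with h | h <;>
        rcases Int.units_eq_one_or (Equiv.Perm.sign ρ) with h' | h' <;> simp [h, h']
    have hprod : (∏ i : Fin N, m (-(((σ i : ℕ) : ℤ) - (((ρ * σ) i : ℕ) : ℤ))))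
        = ∏ i : Fin N, m (((ρ i : ℕ) : ℤ) - ((i : ℕ) : ℤ)) := by
      rw [← Equiv.prod_comp σ (fun k => m (((ρ k : ℕ) : ℤ) - ((k : ℕ) : ℤ)))]
      apply Finset.prod_congr rfl
      intro i _
      congr 1
      have : ((ρ * σ) i : ℕ) = (ρ (σ i) : ℕ) := by simp [Equiv.Perm.mul_apply]
      rw [this]
      ring
    rw [hsgn, hprod]
  rw [Finset.sum_congr rfl (fun σ _ => step1 σ), Finset.sum_const, Finset.card_univ,
    Fintype.card_perm, Fintype.card_fin, nsmul_eq_mul]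
  congr 1
  rw [Matrix.det_apply']
  apply Finset.sum_congr rfl
  intro ρ _
  simp [Matrix.of_apply]

end Aux


theorem asymmetric_hopping_det_subcritical
    (w : ℂ) (v : ℝ) (hv0 : 0 ≤ v) (hv1 : v < 1) (φv : ℝ)
    (hcosh : Real.cosh φv = 1 / Real.sqrt (1 - v ^ 2))
    (hsinh : Real.sinh φv = v / Real.sqrt (1 - v ^ 2))
    (N : ℕ) (hN : 1 ≤ N) :
    (1 / (N.factorial : ℂ)) *
      ∫ φ : Fin N → ℝ in Set.univ.pi (fun _ => Set.Icc (-Real.pi) Real.pi),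
        ((∏ j : Fin N, ∏ k : Fin N, if j < k then
            ((‖Complex.exp (Complex.I * φ j) - Complex.exp (Complex.I * φ k)‖ : ℝ) : ℂ) ^ 2
          else 1) *
          (∏ j : Fin N,
            Complex.exp (2 * w * ((Real.cos (φ j) : ℂ) - Complex.I * v * Real.sin (φ j)))) *
          (1 / (2 * (Real.pi : ℂ))) ^ N) =
      Matrix.det (Matrix.of fun j k : Fin N =>
        ((Real.exp (((k : ℝ) - (j : ℝ)) * φv) : ℝ) : ℂ) *
          ((1 / (2 * (Real.pi : ℂ))) *
            ∫ θ in (-Real.pi)..Real.pi,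
              Complex.exp (2 * w * (Real.sqrt (1 - v ^ 2) : ℝ) * Real.cos θ) *
                Complex.exp (-Complex.I * ((j : ℤ) - (k : ℤ)) * θ))) := by
  classical
  have h1 : (∫ φ : Fin N → ℝ in Set.univ.pi (fun _ => Set.Icc (-Real.pi) Real.pi),
        ((∏ j : Fin N, ∏ k : Fin N, if j < k then
            ((‖Complex.exp (Complex.I * φ j) - Complex.exp (Complex.I * φ k)‖ : ℝ) : ℂ) ^ 2
          else 1) *
          (∏ j : Fin N,
            Complex.exp (2 * w * ((Real.cos (φ j) : ℂ) - Complex.I * v * Real.sin (φ j)))) *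
          (1 / (2 * (Real.pi : ℂ))) ^ N))
      = ∫ x : Fin N → ℝ in Set.univ.pi (fun _ => Set.Icc (-Real.pi) Real.pi),
          ∑ σ : Equiv.Perm (Fin N), ∑ τ : Equiv.Perm (Fin N),
            (((Equiv.Perm.sign σ : ℤ) : ℂ) * ((Equiv.Perm.sign τ : ℤ) : ℂ)) *
              ∏ i : Fin N, gfun w v (((σ i : ℕ) : ℤ) - ((τ i : ℕ) : ℤ)) (x i) :=
    MeasureTheory.integral_congr_ae (Filter.Eventually.of_forall fun x => integrand_expand w v N x)
  rw [h1]
  have hint : ∀ σ τ : Equiv.Perm (Fin N),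
      MeasureTheory.IntegrableOn
        (fun x : Fin N → ℝ => (((Equiv.Perm.sign σ : ℤ) : ℂ) * ((Equiv.Perm.sign τ : ℤ) : ℂ)) *
          ∏ i : Fin N, gfun w v (((σ i : ℕ) : ℤ) - ((τ i : ℕ) : ℤ)) (x i))
        (Set.univ.pi (fun _ => Set.Icc (-Real.pi) Real.pi)) volume := by
    intro σ τ
    apply ContinuousOn.integrableOn_compact (isCompact_univ_pi fun _ => isCompact_Icc)
    apply Continuous.continuousOn
    exact continuous_const.mul (continuous_finset_prod Finset.univ fun i _ =>
      (gfun_cont w v _).comp (continuous_apply i))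
  rw [MeasureTheory.integral_finset_sum _ (fun σ _ =>
    MeasureTheory.integrable_finset_sum _ (fun τ _ => hint σ τ))]
  have h2 : ∀ σ : Equiv.Perm (Fin N),
      (∫ x : Fin N → ℝ in Set.univ.pi (fun _ => Set.Icc (-Real.pi) Real.pi),
        ∑ τ : Equiv.Perm (Fin N),
          (((Equiv.Perm.sign σ : ℤ) : ℂ) * ((Equiv.Perm.sign τ : ℤ) : ℂ)) *
            ∏ i : Fin N, gfun w v (((σ i : ℕ) : ℤ) - ((τ i : ℕ) : ℤ)) (x i))
      = ∑ τ : Equiv.Perm (Fin N),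
          (((Equiv.Perm.sign σ : ℤ) : ℂ) * ((Equiv.Perm.sign τ : ℤ) : ℂ)) *
            ∏ i : Fin N, mcoef w v (-((((σ i : ℕ) : ℤ)) - ((τ i : ℕ) : ℤ))) := by
    intro σ
    rw [MeasureTheory.integral_finset_sum _ (fun τ _ => hint σ τ)]
    apply Finset.sum_congr rfl
    intro τ _
    rw [MeasureTheory.integral_const_mul]
    congr 1
    rw [box_fubini N (fun i φ => gfun w v (((σ i : ℕ) : ℤ) - ((τ i : ℕ) : ℤ)) φ)]
    apply Finset.prod_congr rfl
    intro i _
    exact gfun_int w v _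
  rw [Finset.sum_congr rfl (fun σ _ => h2 σ), perm_sum N (mcoef w v), ← mul_assoc, one_div,
    inv_mul_cancel₀ (by exact_mod_cast N.factorial_ne_zero), one_mul]
  apply congrArg Matrix.det
  ext j k
  simp only [Matrix.of_apply]
  unfold mcoef
  rw [entry_eq w v hv0 hv1 φv hcosh hsinh ((j : ℤ) - (k : ℤ))]
  have he : Real.exp (-((((j : ℤ) - (k : ℤ)) : ℤ) : ℝ) * φv)
      = Real.exp (((k : ℝ) - (j : ℝ)) * φv) := by
    congr 1
    push_cast
    ring
  rw [he]
  have hI : (∫ θ in (-Real.pi)..Real.pi,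
      Complex.exp (2*w*((Real.sqrt (1-v^2) : ℝ):ℂ)*(Real.cos θ : ℂ)) *
        Complex.exp (-Complex.I*(((((j : ℤ) - (k : ℤ))) : ℤ):ℂ)*θ))
      = ∫ θ in (-Real.pi)..Real.pi,
          Complex.exp (2 * w * (Real.sqrt (1 - v ^ 2) : ℝ) * Real.cos θ) *
            Complex.exp (-Complex.I * ((j : ℤ) - (k : ℤ)) * θ) := by
    apply intervalIntegral.integral_congr
    intro θ _
    congr 1
    congr 1
    push_cast
    ring
  rw [hI]
  ring
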